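/- (Theorem 4.2, simple exclusion, open-open network, detailed balance) Suppose: the product V(n) = ∏_{q∈Λ} λ̄_q(n_q;y)/μ̄_q(n_q;y) does not depend on the configuration y : Λ → {0,1} (condition 4.10); condition (4.2a) λ_k(n_k−1;y)/μ_k(n_k;y)·β_{kl}(n_k,n_l;y) = λ_l(n_l;y)/μ_l(n_l+1;y)·β_{lk}(n_l+1,n_k−1;y) for k ≠ l, y_k = y_l = 0, n_k ≥ 1; condition (4.2b) λ_j(n_j−1;y)/μ_j(n_j;y)·θ_{jk}(n_j,n_k;y) = λ_k(n_k;y)/μ_k(n_k+1;y)·θ_{kj}(n_k+1,n_j−1;y) for y_j = 1, y_k = 0, n_j ≥ 1; condition (4.4) λ_i(n_i−1;y)γ_i(n_i−1)/μ_i(n_i;y)·ε_{ij}(n_i,n_j;y) = λ_j(n_j;y)γ_j(n_j)/μ_j(n_j+1;y)·ε_{ji}(n_j+1,n_i−1;y) for i ≠ j, y_i = y_j = 1, n_i ≥ 1; and condition (4.11) τ_{jj'}(n;y)·ξ_j/η_j = τ_{j'j}(n;y+e^{j→j'})·ξ_{j'}/η_{j'} for y_j = 1, y_{j'} = 0. Then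 the weight w(y,n) = V(n) · ∏_{j : y_j = 1} [ξ_j γ̄_j(n_j)/η_j] satisfies the detailed balance equations: (i) w(y,n)·λ_p(n_p;y)·[γ_p(n_p)]^{y_p} = w(y, n+e^p)·μ_p(n_p+1;y) for every p ∈ Λ; (ii) w(y,n)·β_{kl}(n_k,n_l;y) = w(y, n+e^{k→l})·β_{lk}(n_l+1,n_k−1;y) for y_k = y_l = 0, k ≠ l, n_k ≥ 1; (iii) w(y,n)·ε_{ij}(n_i,n_j;y) = w(y, n+e^{i→j})·ε_{ji}(n_j+1,n_i−1;y) for y_i = y_j = 1, i ≠ j, n_i ≥ 1; (iv) w(y,n)·θ_{jk}(n_j,n_k;y) = w(y, n+e^{j→k})·θ_{kj}(n_k+1,n_j−1;y)·γ_j(n_j−1) for y_j = 1, y_k = 0, n_j ≥ 1; (v) w(y,n)·γ̄_j(n_j)^{−1}·τ_{jj'}(n;y) = w(y+e^{j→j'}, n)·γ̄_{j'}(n_{j'})^{−1}·τ_{j'j}(n;y+e^{j→j'}) for y_j = 1, y_{j'} = 0; (vi) w(y,n)·ξ_k γ̄_k(n_k) = w(y+e^k, n)·η_k whenever y_k = 0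 (arrival of a distinguished customer at k paired with its exit). -/

import Mathlib

/-- The `e^k` configuration increment: `n + e^k`. -/
def bump {Λ : Type*} [DecidableEq Λ] (n : Λ → ℕ) (k : Λ) : Λ → ℕ :=
  fun l => n l + (if l = k then 1 else 0)

/-- The jump move `n + e^{i→k} = n - e^i + e^k`. -/
def move {Λ : Type*} [DecidableEq Λ] (n : Λ → ℕ) (i k : Λ) : Λ → ℕ :=
  fun l => n l - (if l = i then 1 else 0) + (if l = k then 1 else 0)

/-- Theorem 4.2, simple exclusion, open-open network, detailed
balance: under conditions (4.10), (4.2), (4.4) and (4.11), the weights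
`w(y,n) = V(n) ∏_{j:y_j=1} [ξ_j γ̄_j(n_j)/η_j]` satisfy detailed balance.
Occupation configurations `y : Λ → {0,1}` are encoded as `y : Λ → ℕ` with
`∀ s, y s ≤ 1`. -/
theorem exclusion_open_open_detailed_balance
    (Λ : Type*) [Fintype Λ] [DecidableEq Λ] [Nonempty Λ]
    (lam mu : Λ → ℕ → (Λ → ℕ) → ℝ) (gam : Λ → ℕ → ℝ)
    (hlam : ∀ p m y, 0 ≤ lam p m y) (hmu : ∀ p m y, 0 < mu p m y)
    (hgam : ∀ p m, 0 < gam p m) (hgam0 : ∀ p, gam p 0 = 1)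
    (lamBar muBar : Λ → ℕ → (Λ → ℕ) → ℝ) (gamBar : Λ → ℕ → ℝ)
    (hlamBar : ∀ p m y, lamBar p m y = ∏ u ∈ Finset.range m, lam p u y)
    (hmuBar : ∀ p m y, muBar p m y = ∏ u ∈ Finset.range m, mu p (u + 1) y)
    (hgamBar : ∀ p m, gamBar p m = ∏ u ∈ Finset.range m, gam p u)
    (β θ ε : Λ → Λ → ℕ → ℕ → (Λ → ℕ) → ℝ) (τ : Λ → Λ → (Λ → ℕ) → (Λ → ℕ) → ℝ)
    (hβnn : ∀ k l a b y, 0 ≤ β k l a b y) (hθnn : ∀ j k a b y, 0 ≤ θ j k a b y)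
    (hεnn : ∀ i j a b y, 0 ≤ ε i j a b y) (hτnn : ∀ j j' n y, 0 ≤ τ j j' n y)
    (ξ η : Λ → ℝ) (hξ : ∀ k, 0 < ξ k) (hη : ∀ k, 0 < η k)
    -- (4.10): V(n) does not depend on y
    (V : (Λ → ℕ) → ℝ)
    (hV : ∀ (y : Λ → ℕ), (∀ s, y s ≤ 1) → ∀ n : Λ → ℕ,
      V n = ∏ q, lamBar q (n q) y / muBar q (n q) y)
    -- (4.2a)
    (h42a : ∀ (y : Λ → ℕ), (∀ s, y s ≤ 1) → ∀ (k l : Λ) (a b : ℕ),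
      k ≠ l → y k = 0 → y l = 0 → 1 ≤ a →
      lam k (a - 1) y / mu k a y * β k l a b y =
        lam l b y / mu l (b + 1) y * β l k (b + 1) (a - 1) y)
    -- (4.2b)
    (h42b : ∀ (y : Λ → ℕ), (∀ s, y s ≤ 1) → ∀ (j k : Λ) (a b : ℕ),
      y j = 1 → y k = 0 → 1 ≤ a →
      lam j (a - 1) y / mu j a y * θ j k a b y =
        lam k b y / mu k (b + 1) y * θ k j (b + 1) (a - 1) y)
    -- (4.4)
    (h44 : ∀ (y : Λ → ℕ), (∀ s, y s ≤ 1) → ∀ (i j : Λ) (a b : ℕ),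
      i ≠ j → y i = 1 → y j = 1 → 1 ≤ a →
      lam i (a - 1) y * gam i (a - 1) / mu i a y * ε i j a b y =
        lam j b y * gam j b / mu j (b + 1) y * ε j i (b + 1) (a - 1) y)
    -- (4.11)
    (h411 : ∀ (y : Λ → ℕ), (∀ s, y s ≤ 1) → ∀ (j j' : Λ) (n : Λ → ℕ),
      y j = 1 → y j' = 0 →
      τ j j' n y * ξ j / η j = τ j' j n (move y j j') * ξ j' / η j')
    (w : (Λ → ℕ) → (Λ → ℕ) → ℝ)
    (hw : ∀ (y n : Λ → ℕ), w y n =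
      V n * ∏ j ∈ Finset.univ.filter (fun j => y j = 1),
        ξ j * gamBar j (n j) / η j) :
    ∀ (y : Λ → ℕ), (∀ s, y s ≤ 1) → ∀ n : Λ → ℕ,
      -- (i) arrival at p paired with exit from p
      (∀ p, w y n * (lam p (n p) y * gam p (n p) ^ (y p)) =
        w y (bump n p) * mu p (n p + 1) y) ∧
      -- (ii) task jump between unloaded sites
      (∀ k l, y k = 0 → y l = 0 → k ≠ l → 1 ≤ n k →
        w y n * β k l (n k) (n l) y =
          w y (move n k l) * β l k (n l + 1) (n k - 1) y) ∧
      -- (iii) task jump between loaded sites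
      (∀ i j, y i = 1 → y j = 1 → i ≠ j → 1 ≤ n i →
        w y n * ε i j (n i) (n j) y =
          w y (move n i j) * ε j i (n j + 1) (n i - 1) y) ∧
      -- (iv) task jump from a loaded to an unloaded site
      (∀ j k, y j = 1 → y k = 0 → 1 ≤ n j →
        w y n * θ j k (n j) (n k) y =
          w y (move n j k) * (θ k j (n k + 1) (n j - 1) y * gam j (n j - 1))) ∧
      -- (v) leap of a distinguished customer
      (∀ j j', y j = 1 → y j' = 0 →
        w y n * (gamBar j (n j))⁻¹ * τ j j' n y =
          w (move y j j') n * (gamBar j' (n j'))⁻¹ * τ j' j n (move y j j')) ∧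
      -- (vi) arrival of a distinguished customer paired with its exit
      (∀ k, y k = 0 →
        w y n * (ξ k * gamBar k (n k)) = w (bump y k) n * η k) := by
  intro y hy n
  classical
  -- basic recurrences and positivity
  have hlamS : ∀ (p : Λ) (m : ℕ) (y' : Λ → ℕ),
      lamBar p (m + 1) y' = lamBar p m y' * lam p m y' := by
    intro p m y'; rw [hlamBar, hlamBar, Finset.prod_range_succ]
  have hmuS : ∀ (p : Λ) (m : ℕ) (y' : Λ → ℕ),
      muBar p (m + 1) y' = muBar p m y' * mu p (m + 1) y' := by
    intro p m y'; rw [hmuBar, hmuBar, Finset.prod_range_succ]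
  have hgamS : ∀ (p : Λ) (m : ℕ), gamBar p (m + 1) = gamBar p m * gam p m := by
    intro p m; rw [hgamBar, hgamBar, Finset.prod_range_succ]
  have hmuBpos : ∀ (p : Λ) (m : ℕ) (y' : Λ → ℕ), 0 < muBar p m y' := by
    intro p m y'; rw [hmuBar]; exact Finset.prod_pos fun u _ => hmu p (u + 1) y'
  have hgamBpos : ∀ (p : Λ) (m : ℕ), 0 < gamBar p m := by
    intro p m; rw [hgamBar]; exact Finset.prod_pos fun u _ => hgam p u
  -- the key single-site balance for V
  have key : ∀ (n' : Λ → ℕ) (p : Λ),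
      V n' * lam p (n' p) y = V (bump n' p) * mu p (n' p + 1) y := by
    intro n' p
    rw [hV y hy n', hV y hy (bump n' p)]
    rw [← Finset.mul_prod_erase Finset.univ
        (fun q => lamBar q (n' q) y / muBar q (n' q) y) (Finset.mem_univ p),
      ← Finset.mul_prod_erase Finset.univ
        (fun q => lamBar q (bump n' p q) y / muBar q (bump n' p q) y) (Finset.mem_univ p)]
    have hrest : ∏ q ∈ Finset.univ.erase p,
        lamBar q (bump n' p q) y / muBar q (bump n' p q) y
        = ∏ q ∈ Finset.univ.erase p, lamBar q (n' q) y / muBar q (n' q) y := by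
      refine Finset.prod_congr rfl fun q hq => ?_
      have hq' : q ≠ p := (Finset.mem_erase.mp hq).1
      simp [bump, hq']
    beta_reduce
    rw [hrest]
    have hbp : bump n' p p = n' p + 1 := by simp [bump]
    rw [hbp, hlamS, hmuS]
    have h1 := (hmuBpos p (n' p) y).ne'
    have h2 := (hmu p (n' p + 1) y).ne'
    field_simp [h1, h2]
  -- decrement versions of the key identity
  have keydec : ∀ (k : Λ), 1 ≤ n k →
      V (fun q => if q = k then n k - 1 else n q) * lam k (n k - 1) y
        = V n * mu k (n k) y := by
    intro k hk
    have h := key (fun q => if q = k then n k - 1 else n q) k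
    rw [if_pos rfl] at h
    have e2 : bump (fun q => if q = k then n k - 1 else n q) k = n := by
      funext q
      by_cases hq : q = k
      · subst hq; simp [bump]; omega
      · simp [bump, hq]
    rw [e2, show n k - 1 + 1 = n k from by omega] at h
    exact h
  have keymove2 : ∀ (k l : Λ), k ≠ l →
      V (fun q => if q = k then n k - 1 else n q) * lam l (n l) y
        = V (move n k l) * mu l (n l + 1) y := by
    intro k l hkl
    have h := key (fun q => if q = k then n k - 1 else n q) l
    rw [if_neg (Ne.symm hkl : ¬ l = k)] at h
    have e2 : bump (fun q => if q = k then n k - 1 else n q) l = move n k l := by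
      funext q
      by_cases h1 : q = k
      · subst h1; simp [bump, move, hkl]
      · by_cases h2 : q = l
        · subst h2; simp [bump, move, Ne.symm hkl]
        · simp [bump, move, h1, h2]
    rw [e2] at h
    exact h
  refine ⟨?_, ?_, ?_, ?_, ?_, ?_⟩
  · -- (i)
    intro p
    rw [hw, hw]
    rcases Nat.le_one_iff_eq_zero_or_eq_one.mp (hy p) with h0 | h1
    · have hprod : ∏ j ∈ Finset.univ.filter (fun j => y j = 1),
          ξ j * gamBar j (bump n p j) / η j
          = ∏ j ∈ Finset.univ.filter (fun j => y j = 1),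
            ξ j * gamBar j (n j) / η j := by
        refine Finset.prod_congr rfl fun j hj => ?_
        have hj1 : y j = 1 := (Finset.mem_filter.mp hj).2
        have hjp : j ≠ p := fun h => by rw [h, h0] at hj1; exact absurd hj1 (by omega)
        simp [bump, hjp]
      rw [hprod, h0, pow_zero, mul_one]
      linear_combination (∏ j ∈ Finset.univ.filter (fun j => y j = 1),
        ξ j * gamBar j (n j) / η j) * key n p
    · have hpS : p ∈ Finset.univ.filter (fun j => y j = 1) :=
        Finset.mem_filter.mpr ⟨Finset.mem_univ p, h1⟩
      rw [← Finset.mul_prod_erase _ (fun j => ξ j * gamBar j (n j) / η j) hpS,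
        ← Finset.mul_prod_erase _ (fun j => ξ j * gamBar j (bump n p j) / η j) hpS]
      have hrest : ∏ j ∈ (Finset.univ.filter (fun j => y j = 1)).erase p,
          ξ j * gamBar j (bump n p j) / η j
          = ∏ j ∈ (Finset.univ.filter (fun j => y j = 1)).erase p,
            ξ j * gamBar j (n j) / η j := by
        refine Finset.prod_congr rfl fun j hj => ?_
        have hjp : j ≠ p := (Finset.mem_erase.mp hj).1
        simp [bump, hjp]
      beta_reduce
      rw [hrest]
      have hbp : bump n p p = n p + 1 := by simp [bump]
      rw [hbp, hgamS, h1, pow_one]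
      linear_combination (gam p (n p) * (ξ p * gamBar p (n p) / η p) *
        ∏ j ∈ (Finset.univ.filter (fun j => y j = 1)).erase p,
          ξ j * gamBar j (n j) / η j) * key n p
  · -- (ii)
    intro k l hk hl hkl hnk
    rw [hw, hw]
    have hprod : ∏ j ∈ Finset.univ.filter (fun j => y j = 1),
        ξ j * gamBar j (move n k l j) / η j
        = ∏ j ∈ Finset.univ.filter (fun j => y j = 1),
          ξ j * gamBar j (n j) / η j := by
      refine Finset.prod_congr rfl fun j hj => ?_
      have hj1 : y j = 1 := (Finset.mem_filter.mp hj).2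
      have hjk : j ≠ k := fun h => by rw [h, hk] at hj1; exact absurd hj1 (by omega)
      have hjl : j ≠ l := fun h => by rw [h, hl] at hj1; exact absurd hj1 (by omega)
      simp [move, hjk, hjl]
    rw [hprod]
    have A := keydec k hnk
    have B := keymove2 k l hkl
    have C := h42a y hy k l (n k) (n l) hkl hk hl hnk
    rw [div_mul_eq_mul_div, div_mul_eq_mul_div,
      div_eq_div_iff (hmu k (n k) y).ne' (hmu l (n l + 1) y).ne'] at C
    apply mul_right_cancel₀ (mul_ne_zero (hmu k (n k) y).ne' (hmu l (n l + 1) y).ne')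
    set P := ∏ j ∈ Finset.univ.filter (fun j => y j = 1), ξ j * gamBar j (n j) / η j
    linear_combination (-(P * β k l (n k) (n l) y * mu l (n l + 1) y)) * A
      + (P * β l k (n l + 1) (n k - 1) y * mu k (n k) y) * B
      + (P * V (fun q => if q = k then n k - 1 else n q)) * C
  · -- (iii)
    intro i j hi hj hij hni
    rw [hw, hw]
    have hiS : i ∈ Finset.univ.filter (fun j => y j = 1) :=
      Finset.mem_filter.mpr ⟨Finset.mem_univ i, hi⟩
    have hjS : j ∈ (Finset.univ.filter (fun j' => y j' = 1)).erase i :=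
      Finset.mem_erase.mpr ⟨Ne.symm hij, Finset.mem_filter.mpr ⟨Finset.mem_univ j, hj⟩⟩
    have egi : gamBar i (n i) = gamBar i (n i - 1) * gam i (n i - 1) := by
      have h := hgamS i (n i - 1)
      rw [show n i - 1 + 1 = n i from by omega] at h
      exact h
    have D : (∏ j' ∈ Finset.univ.filter (fun j' => y j' = 1),
          ξ j' * gamBar j' (move n i j j') / η j') * gam i (n i - 1)
        = (∏ j' ∈ Finset.univ.filter (fun j' => y j' = 1),
          ξ j' * gamBar j' (n j') / η j') * gam j (n j) := by
      rw [← Finset.mul_prod_erase _ (fun j' => ξ j' * gamBar j' (move n i j j') / η j') hiS,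
        ← Finset.mul_prod_erase _ (fun j' => ξ j' * gamBar j' (n j') / η j') hiS,
        ← Finset.mul_prod_erase _ (fun j' => ξ j' * gamBar j' (move n i j j') / η j') hjS,
        ← Finset.mul_prod_erase _ (fun j' => ξ j' * gamBar j' (n j') / η j') hjS]
      have hrest : ∏ j' ∈ ((Finset.univ.filter (fun j' => y j' = 1)).erase i).erase j,
          ξ j' * gamBar j' (move n i j j') / η j'
          = ∏ j' ∈ ((Finset.univ.filter (fun j' => y j' = 1)).erase i).erase j,
            ξ j' * gamBar j' (n j') / η j' := by
        refine Finset.prod_congr rfl fun q hq => ?_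
        have hqj : q ≠ j := (Finset.mem_erase.mp hq).1
        have hqi : q ≠ i := (Finset.mem_erase.mp (Finset.mem_erase.mp hq).2).1
        simp [move, hqi, hqj]
      beta_reduce
      rw [hrest]
      have e1 : move n i j i = n i - 1 := by simp [move, hij]
      have e2 : move n i j j = n j + 1 := by simp [move, Ne.symm hij]
      rw [e1, e2, hgamS, egi]
      ring
    have A := keydec i hni
    have B := keymove2 i j hij
    have C := h44 y hy i j (n i) (n j) hij hi hj hni
    rw [div_mul_eq_mul_div, div_mul_eq_mul_div,
      div_eq_div_iff (hmu i (n i) y).ne' (hmu j (n j + 1) y).ne'] at C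
    apply mul_right_cancel₀ (mul_ne_zero (mul_ne_zero (hmu i (n i) y).ne'
      (hmu j (n j + 1) y).ne') (hgam i (n i - 1)).ne')
    set P := ∏ j' ∈ Finset.univ.filter (fun j' => y j' = 1),
      ξ j' * gamBar j' (n j') / η j' with hP
    set Q := ∏ j' ∈ Finset.univ.filter (fun j' => y j' = 1),
      ξ j' * gamBar j' (move n i j j') / η j' with hQ
    linear_combination
      (-(V (move n i j) * ε j i (n j + 1) (n i - 1) y * mu i (n i) y * mu j (n j + 1) y)) * D
      + (-(P * ε i j (n i) (n j) y * mu j (n j + 1) y * gam i (n i - 1))) * A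
      + (P * ε j i (n j + 1) (n i - 1) y * mu i (n i) y * gam j (n j)) * B
      + (P * V (fun q => if q = i then n i - 1 else n q)) * C
  · -- (iv)
    intro j k hj hk hnj
    rw [hw, hw]
    have hjk : j ≠ k := fun h => by rw [h, hk] at hj; exact absurd hj (by omega)
    have hjS : j ∈ Finset.univ.filter (fun j' => y j' = 1) :=
      Finset.mem_filter.mpr ⟨Finset.mem_univ j, hj⟩
    have egj : gamBar j (n j) = gamBar j (n j - 1) * gam j (n j - 1) := by
      have h := hgamS j (n j - 1)
      rw [show n j - 1 + 1 = n j from by omega] at h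
      exact h
    have D : (∏ j' ∈ Finset.univ.filter (fun j' => y j' = 1),
          ξ j' * gamBar j' (move n j k j') / η j') * gam j (n j - 1)
        = ∏ j' ∈ Finset.univ.filter (fun j' => y j' = 1),
          ξ j' * gamBar j' (n j') / η j' := by
      rw [← Finset.mul_prod_erase _ (fun j' => ξ j' * gamBar j' (move n j k j') / η j') hjS,
        ← Finset.mul_prod_erase _ (fun j' => ξ j' * gamBar j' (n j') / η j') hjS]
      have hrest : ∏ j' ∈ (Finset.univ.filter (fun j' => y j' = 1)).erase j,
          ξ j' * gamBar j' (move n j k j') / η j'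
          = ∏ j' ∈ (Finset.univ.filter (fun j' => y j' = 1)).erase j,
            ξ j' * gamBar j' (n j') / η j' := by
        refine Finset.prod_congr rfl fun q hq => ?_
        have hqj : q ≠ j := (Finset.mem_erase.mp hq).1
        have hq1 : y q = 1 := (Finset.mem_filter.mp (Finset.mem_erase.mp hq).2).2
        have hqk : q ≠ k := fun h => by rw [h, hk] at hq1; exact absurd hq1 (by omega)
        simp [move, hqj, hqk]
      beta_reduce
      rw [hrest]
      have e1 : move n j k j = n j - 1 := by simp [move, hjk]
      rw [e1, egj]
      ring
    have A := keydec j hnj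
    have B := keymove2 j k hjk
    have C := h42b y hy j k (n j) (n k) hj hk hnj
    rw [div_mul_eq_mul_div, div_mul_eq_mul_div,
      div_eq_div_iff (hmu j (n j) y).ne' (hmu k (n k + 1) y).ne'] at C
    apply mul_right_cancel₀ (mul_ne_zero (hmu j (n j) y).ne' (hmu k (n k + 1) y).ne')
    set P := ∏ j' ∈ Finset.univ.filter (fun j' => y j' = 1),
      ξ j' * gamBar j' (n j') / η j' with hP
    set Q := ∏ j' ∈ Finset.univ.filter (fun j' => y j' = 1),
      ξ j' * gamBar j' (move n j k j') / η j' with hQ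
    linear_combination
      (-(V (move n j k) * θ k j (n k + 1) (n j - 1) y * mu j (n j) y * mu k (n k + 1) y)) * D
      + (-(P * θ j k (n j) (n k) y * mu k (n k + 1) y)) * A
      + (P * θ k j (n k + 1) (n j - 1) y * mu j (n j) y) * B
      + (P * V (fun q => if q = j then n j - 1 else n q)) * C
  · -- (v)
    intro j j' hj hj'
    have hjj' : j ≠ j' := fun h => by rw [h, hj'] at hj; exact absurd hj (by omega)
    have hfilter : Finset.univ.filter (fun s => move y j j' s = 1)
        = insert j' ((Finset.univ.filter (fun s => y s = 1)).erase j) := by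
      ext s
      simp only [Finset.mem_filter, Finset.mem_univ, true_and, Finset.mem_insert,
        Finset.mem_erase]
      by_cases h1 : s = j'
      · subst h1
        simp [move, hj', Ne.symm hjj']
      · by_cases h2 : s = j
        · subst h2
          simp [move, hj, h1, hjj']
        · simp [move, h1, h2]
    have hjS : j ∈ Finset.univ.filter (fun s => y s = 1) :=
      Finset.mem_filter.mpr ⟨Finset.mem_univ j, hj⟩
    have hj'notin : j' ∉ (Finset.univ.filter (fun s => y s = 1)).erase j := by
      simp [hj']
    rw [hw, hw, hfilter, Finset.prod_insert hj'notin,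
      ← Finset.mul_prod_erase _ (fun s => ξ s * gamBar s (n s) / η s) hjS]
    have E := h411 y hy j j' n hj hj'
    rw [div_eq_div_iff (hη j).ne' (hη j').ne'] at E
    have g1 := (hgamBpos j (n j)).ne'
    have g2 := (hgamBpos j' (n j')).ne'
    have e1 := (hη j).ne'
    have e2 := (hη j').ne'
    set R := ∏ s ∈ (Finset.univ.filter (fun s => y s = 1)).erase j,
      ξ s * gamBar s (n s) / η s with hR
    field_simp
    linear_combination (V n * R) * E
  · -- (vi)
    intro k hk
    have hfilter : Finset.univ.filter (fun s => bump y k s = 1)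
        = insert k (Finset.univ.filter (fun s => y s = 1)) := by
      ext s
      simp only [Finset.mem_filter, Finset.mem_univ, true_and, Finset.mem_insert]
      by_cases h1 : s = k
      · subst h1; simp [bump, hk]
      · simp [bump, h1]
    have hknotin : k ∉ Finset.univ.filter (fun s => y s = 1) := by
      simp [hk]
    rw [hw, hw, hfilter, Finset.prod_insert hknotin]
    have e1 := (hη k).ne'
    have hcancel : ξ k * gamBar k (n k) / η k * η k = ξ k * gamBar k (n k) :=
      div_mul_cancel₀ _ e1
    linear_combination (-(V n * ∏ s ∈ Finset.univ.filter (fun s => y s = 1),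
      ξ s * gamBar s (n s) / η s)) * hcancel
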